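/- (Theorem 3.1, (iv) ⇒ (i)) Assume (iv): there exists C4 > 0 such that for all t > 0 and all u0 ∈ L²(Ω) with u0 ≠ 0, ‖S(t)u0‖ ≤ e^{C4(1 + (1/t)^{σ/(1−σ)})} e^{((C4/t) ln( ‖u0‖ / ‖S(t)u0‖ ))^σ} ‖S(t)u0‖_ω. Then (i) holds: there exists C1 > 0 such that for every Λ > 0 and every real sequence (a_j), Σ_{j : λ_j ≤ Λ} |a_j|² ≤ e^{C1(1+Λ^σ)} ∫_ω | Σ_{j : λ_j ≤ Λ} a_j Φ_j |². -/

import Mathlib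

open MeasureTheory Set Filter
open scoped RealInnerProductSpace

noncomputable section

/-- The heat semigroup `S(t)u0 = sum_j e^{-lam_j t} <u0, Phi_j> Phi_j` on `L2(Omega)`,
given a Hilbert basis `B` of eigenfunctions and eigenvalues `lam`. -/
noncomputable def heatSG {d : ℕ} {Ω : Set (EuclideanSpace ℝ (Fin d))}
    (B : HilbertBasis ℕ ℝ (Lp ℝ 2 (volume.restrict Ω))) (lam : ℕ → ℝ)
    (t : ℝ) (u : Lp ℝ 2 (volume.restrict Ω)) : Lp ℝ 2 (volume.restrict Ω) :=
  ∑' j, (Real.exp (-(lam j) * t) * ⟪u, B j⟫) • B j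

/-- Multiplication by the indicator function `1_omega` on `L2(Omega)`. -/
noncomputable def indLp {d : ℕ} {Ω : Set (EuclideanSpace ℝ (Fin d))}
    (ω : Set (EuclideanSpace ℝ (Fin d))) (hω : MeasurableSet ω)
    (f : Lp ℝ 2 (volume.restrict Ω)) : Lp ℝ 2 (volume.restrict Ω) :=
  MemLp.toLp (ω.indicator ⇑f) ((Lp.memLp f).indicator hω)

variable {E : Type*} [NormedAddCommGroup E] [InnerProductSpace ℝ E]

lemma norm_sq_finsum {v : ℕ → E} (hv : Orthonormal ℝ v) (s : Finset ℕ) (c : ℕ → ℝ) :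
    ‖∑ j ∈ s, c j • v j‖ ^ 2 = ∑ j ∈ s, (c j) ^ 2 := by
  rw [← real_inner_self_eq_norm_sq, hv.inner_sum]
  simp [sq]

lemma inner_finsum_not_mem {v : ℕ → E} (hv : Orthonormal ℝ v) (s : Finset ℕ) (c : ℕ → ℝ)
    {k : ℕ} (hk : k ∉ s) : ⟪∑ j ∈ s, c j • v j, v k⟫ = 0 := by
  rw [sum_inner]
  refine Finset.sum_eq_zero fun i hi => ?_
  rw [real_inner_smul_left, orthonormal_iff_ite.mp hv]
  rw [if_neg (by rintro rfl; exact hk hi), mul_zero]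

lemma heatSG_finsum {d : ℕ} {Ω : Set (EuclideanSpace ℝ (Fin d))}
    (B : HilbertBasis ℕ ℝ (Lp ℝ 2 (volume.restrict Ω))) (lam : ℕ → ℝ) (t : ℝ)
    (s : Finset ℕ) (c : ℕ → ℝ) :
    heatSG B lam t (∑ j ∈ s, c j • B j) =
      ∑ j ∈ s, (Real.exp (-(lam j) * t) * c j) • B j := by
  unfold heatSG
  rw [tsum_eq_sum (s := s) (fun j hj => by
    rw [inner_finsum_not_mem B.orthonormal s c hj, mul_zero, zero_smul])]
  refine Finset.sum_congr rfl fun j hj => ?_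
  rw [B.orthonormal.inner_left_sum c hj]
  simp


set_option maxHeartbeats 1000000 in
/-- Theorem 3.1, (iv) ⇒ (i). -/
theorem log_observation_implies_spectral_ineq
    (d : ℕ) (hd : 1 ≤ d) (Ω ω : Set (EuclideanSpace ℝ (Fin d)))
    (hΩo : IsOpen Ω) (hΩb : Bornology.IsBounded Ω) (hΩc : IsConnected Ω)
    (hωo : IsOpen ω) (hωne : ω.Nonempty) (hωΩ : ω ⊆ Ω) (hωm : MeasurableSet ω)
    (B : HilbertBasis ℕ ℝ (Lp ℝ 2 (volume.restrict Ω)))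
    (lam : ℕ → ℝ) (hpos : ∀ j, 0 < lam j) (hmono : Monotone lam)
    (hlim : Tendsto lam atTop atTop)
    (hfin : ∀ Λ : ℝ, {j : ℕ | lam j ≤ Λ}.Finite)
    (σ : ℝ) (hσ : σ ∈ Ioo (0:ℝ) 1)
    -- (iv)
    (hiv : ∃ C4 > 0, ∀ t > 0, ∀ u0 : Lp ℝ 2 (volume.restrict Ω), u0 ≠ 0 →
      ‖heatSG B lam t u0‖ ≤
        Real.exp (C4 * (1 + (1 / t) ^ (σ / (1 - σ)))) *
          Real.exp ((C4 / t * Real.log (‖u0‖ / ‖heatSG B lam t u0‖)) ^ σ) *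
            ‖indLp ω hωm (heatSG B lam t u0)‖) :
    -- (i)
    ∃ C1 > 0, ∀ Λ > 0, ∀ a : ℕ → ℝ,
      ∑ j ∈ (hfin Λ).toFinset, (a j) ^ 2 ≤
        Real.exp (C1 * (1 + Λ ^ σ)) *
          ‖indLp ω hωm (∑ j ∈ (hfin Λ).toFinset, a j • B j)‖ ^ 2 := by
  obtain ⟨C4, hC4, hIV⟩ := hiv
  have hσ0 := hσ.1
  have hσ1 := hσ.2
  have h1σ : (0:ℝ) < 1 - σ := by linarith
  refine ⟨2 * C4 + 2 * C4 ^ σ, by positivity, fun Λ hΛ a => ?_⟩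
  set s : Finset ℕ := (hfin Λ).toFinset with hs
  have hmem : ∀ j, j ∈ s ↔ lam j ≤ Λ := fun j => (hfin Λ).mem_toFinset
  set u0 : Lp ℝ 2 (volume.restrict Ω) := ∑ j ∈ s, a j • B j with hu0
  -- rewrite LHS as ‖u0‖ ^ 2
  rw [← norm_sq_finsum B.orthonormal s a]
  by_cases h0 : u0 = 0
  · rw [← hu0, h0]
    simp
    positivity
  -- the time
  set t : ℝ := Λ ^ (σ - 1) with ht
  have htpos : 0 < t := Real.rpow_pos_of_pos hΛ _
  -- the backward solution
  set w : Lp ℝ 2 (volume.restrict Ω) := ∑ j ∈ s, (Real.exp (lam j * t) * a j) • B j with hw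
  have hSw : heatSG B lam t w = u0 := by
    rw [hw, heatSG_finsum]
    refine Finset.sum_congr rfl fun j hj => ?_
    rw [← mul_assoc, ← Real.exp_add, neg_mul, neg_add_cancel, Real.exp_zero, one_mul]
  have hwne : w ≠ 0 := by
    intro h
    apply h0
    rw [← hSw, h]
    unfold heatSG
    simp
  have key := hIV t htpos w hwne
  rw [hSw] at key
  have hu0pos : 0 < ‖u0‖ := norm_pos_iff.mpr h0
  -- norm comparisons
  have hnu0 : ‖u0‖ ^ 2 = ∑ j ∈ s, (a j) ^ 2 := norm_sq_finsum B.orthonormal s a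
  have hnw : ‖w‖ ^ 2 = ∑ j ∈ s, (Real.exp (lam j * t) * a j) ^ 2 :=
    norm_sq_finsum B.orthonormal s _
  have hw_le : ‖w‖ ≤ Real.exp (Λ * t) * ‖u0‖ := by
    have hsq : ‖w‖ ^ 2 ≤ (Real.exp (Λ * t) * ‖u0‖) ^ 2 := by
      rw [hnw, mul_pow, hnu0, Finset.mul_sum]
      refine Finset.sum_le_sum fun j hj => ?_
      rw [mul_pow]
      have h1 : Real.exp (lam j * t) ≤ Real.exp (Λ * t) :=
        Real.exp_le_exp.mpr (mul_le_mul_of_nonneg_right ((hmem j).mp hj) htpos.le)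
      have h2 : Real.exp (lam j * t) ^ 2 ≤ Real.exp (Λ * t) ^ 2 :=
        pow_le_pow_left₀ (Real.exp_pos _).le h1 2
      exact mul_le_mul_of_nonneg_right h2 (sq_nonneg _)
    exact (pow_le_pow_iff_left₀ (norm_nonneg _) (by positivity) two_ne_zero).mp hsq
  have hu0_le_w : ‖u0‖ ≤ ‖w‖ := by
    have hsq : ‖u0‖ ^ 2 ≤ ‖w‖ ^ 2 := by
      rw [hnw, hnu0]
      refine Finset.sum_le_sum fun j hj => ?_
      rw [mul_pow]
      have h1 : (1:ℝ) ≤ Real.exp (lam j * t) := by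
        rw [Real.one_le_exp_iff]
        exact (mul_pos (hpos j) htpos).le
      have h2 : (1:ℝ) ≤ Real.exp (lam j * t) ^ 2 := one_le_pow₀ h1
      calc (a j) ^ 2 = 1 * (a j) ^ 2 := (one_mul _).symm
        _ ≤ Real.exp (lam j * t) ^ 2 * (a j) ^ 2 :=
            mul_le_mul_of_nonneg_right h2 (sq_nonneg _)
    exact (pow_le_pow_iff_left₀ (norm_nonneg _) (norm_nonneg _) two_ne_zero).mp hsq
  -- bound the log
  have hlog0 : 0 ≤ Real.log (‖w‖ / ‖u0‖) :=
    Real.log_nonneg ((one_le_div hu0pos).mpr hu0_le_w)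
  have hlog : Real.log (‖w‖ / ‖u0‖) ≤ Λ * t := by
    have : ‖w‖ / ‖u0‖ ≤ Real.exp (Λ * t) := (div_le_iff₀ hu0pos).mpr hw_le
    calc Real.log (‖w‖ / ‖u0‖) ≤ Real.log (Real.exp (Λ * t)) :=
          Real.log_le_log (div_pos (hu0pos.trans_le hu0_le_w) hu0pos) this
      _ = Λ * t := Real.log_exp _
  -- bound the second exponent
  have hexp2 : (C4 / t * Real.log (‖w‖ / ‖u0‖)) ^ σ ≤ C4 ^ σ * Λ ^ σ := by
    rw [← Real.mul_rpow hC4.le hΛ.le]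
    refine Real.rpow_le_rpow (by positivity) ?_ hσ0.le
    calc C4 / t * Real.log (‖w‖ / ‖u0‖) ≤ C4 / t * (Λ * t) :=
          mul_le_mul_of_nonneg_left hlog (by positivity)
      _ = C4 * Λ := by field_simp
  -- compute the first exponent
  have hexp1 : (1 / t) ^ (σ / (1 - σ)) = Λ ^ σ := by
    have h1t : 1 / t = Λ ^ (1 - σ) := by
      rw [ht, one_div, ← Real.rpow_neg hΛ.le, neg_sub]
    have hm : (1 - σ) * (σ / (1 - σ)) = σ := by field_simp
    rw [h1t, ← Real.rpow_mul hΛ.le, hm]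
  rw [hexp1] at key
  -- combine
  set N : ℝ := ‖indLp ω hωm u0‖ with hN
  have hN0 : 0 ≤ N := norm_nonneg _
  have key2 : ‖u0‖ ≤ Real.exp (C4 * (1 + Λ ^ σ) + C4 ^ σ * Λ ^ σ) * N := by
    rw [Real.exp_add]
    calc ‖u0‖ ≤ Real.exp (C4 * (1 + Λ ^ σ)) *
          Real.exp ((C4 / t * Real.log (‖w‖ / ‖u0‖)) ^ σ) * N := key
      _ ≤ Real.exp (C4 * (1 + Λ ^ σ)) * Real.exp (C4 ^ σ * Λ ^ σ) * N := by
          gcongr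
  have hsq2 : ‖u0‖ ^ 2 ≤ (Real.exp (C4 * (1 + Λ ^ σ) + C4 ^ σ * Λ ^ σ) * N) ^ 2 :=
    pow_le_pow_left₀ (norm_nonneg _) key2 2
  have hfinal : (Real.exp (C4 * (1 + Λ ^ σ) + C4 ^ σ * Λ ^ σ)) ^ 2 ≤
      Real.exp ((2 * C4 + 2 * C4 ^ σ) * (1 + Λ ^ σ)) := by
    rw [sq, ← Real.exp_add]
    refine Real.exp_le_exp.mpr ?_
    have h1 : (0:ℝ) ≤ C4 ^ σ := Real.rpow_nonneg hC4.le σ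
    have h2 : (0:ℝ) ≤ Λ ^ σ := Real.rpow_nonneg hΛ.le σ
    nlinarith
  calc ‖u0‖ ^ 2 ≤ (Real.exp (C4 * (1 + Λ ^ σ) + C4 ^ σ * Λ ^ σ)) ^ 2 * N ^ 2 := by
        rw [← mul_pow]; exact hsq2
    _ ≤ Real.exp ((2 * C4 + 2 * C4 ^ σ) * (1 + Λ ^ σ)) * N ^ 2 :=
        mul_le_mul_of_nonneg_right hfinal (sq_nonneg _)
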